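/- For a chordal building set ℬ on a finite set S with no odd connected component, the map sending an alternating ℬ-permutation x = (x₁x₂⋯x_{2k}) to the chain (∅, {x₁,x₂}, {x₁,x₂,x₃,x₄}, …, S) is a bijection between the set of alternating ℬ-permutations on S and the set of maximal chains c of the poset P̂_ℬ such that the edge-label sequence μ_ℬ(c) has no decreasing position. -/

import Mathlib

/-- The restriction of a collection of finsets to subsets of `I`. -/
def BS.restrict (B : Finset (Finset ℕ)) (I : Finset ℕ) : Finset (Finset ℕ) :=
  B.filter (· ⊆ I)

/-- `B` is a building set on `S`. -/
def BS.IsBuilding (S : Finset ℕ) (B : Finset (Finset ℕ)) : Prop :=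
  (∀ J ∈ B, J ⊆ S ∧ J.Nonempty) ∧
  (∀ i ∈ S, ({i} : Finset ℕ) ∈ B) ∧
  (∀ I ∈ B, ∀ J ∈ B, (I ∩ J).Nonempty → I ∪ J ∈ B)

/-- `B` is chordal: every "suffix" `{x ∈ I : a ≤ x}` of an element `I` is in `B`. -/
def BS.IsChordal (B : Finset (Finset ℕ)) : Prop :=
  ∀ I ∈ B, ∀ a ∈ I, I.filter (fun x => a ≤ x) ∈ B

/-- A connected component of `B`: an inclusion-maximal element. -/
def BS.IsComponent (B : Finset (Finset ℕ)) (C : Finset ℕ) : Prop :=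
  C ∈ B ∧ ∀ J ∈ B, C ⊆ J → J = C

/-- The restriction of `B` to `I` has no connected component of odd cardinality. -/
def BS.NoOddComp (B : Finset (Finset ℕ)) (I : Finset ℕ) : Prop :=
  ∀ C ∈ BS.restrict B I, BS.IsComponent (BS.restrict B I) C → Even C.card

/-- The poset `P̂_B` of subsets of `S` whose restriction has no odd component. -/
def BS.hatP (B : Finset (Finset ℕ)) (S : Finset ℕ) : Set (Finset ℕ) :=
  {I | I ⊆ S ∧ BS.NoOddComp B I}

/-- `L` is a (one-line notation) permutation of the finite set `S`. -/
def BS.IsPermOf (S : Finset ℕ) (L : List ℕ) : Prop :=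
  L.Nodup ∧ L.toFinset = S

/-- `L` is a `B`-permutation: each entry lies in the same connected component of the
restriction of `B` to the prefix as the maximum of the prefix. -/
def BS.IsBPerm (B : Finset (Finset ℕ)) (S : Finset ℕ) (L : List ℕ) : Prop :=
  BS.IsPermOf S L ∧
  ∀ i, i < L.length →
    ∃ C : Finset ℕ, BS.IsComponent (BS.restrict B (L.take (i + 1)).toFinset) C ∧
      L.getD i 0 ∈ C ∧ ∃ M ∈ C, ∀ y ∈ (L.take (i + 1)).toFinset, y ≤ M

/-- `L` is alternating: `x₁ > x₂ < x₃ > x₄ < ⋯`. -/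
def BS.IsAlternating (L : List ℕ) : Prop :=
  ∀ i, i + 1 < L.length →
    (i % 2 = 0 → L.getD (i + 1) 0 < L.getD i 0) ∧
    (i % 2 = 1 → L.getD i 0 < L.getD (i + 1) 0)

/-- The maximum of a finset of naturals, as an integer (`0` for `∅`). -/
def BS.fmax (s : Finset ℕ) : ℤ := ((WithBot.unbotD 0 s.max : ℕ) : ℤ)

/-- The minimum of a finset of naturals, as an integer (`0` for `∅`). -/
def BS.fmin (s : Finset ℕ) : ℤ := ((WithTop.untopD 0 s.min : ℕ) : ℤ)

open Classical in
/-- The connected component `𝔠(I₂;I₁)` of `B|_{I₂}` containing `I₂ \ I₁`. -/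
noncomputable def BS.comp (B : Finset (Finset ℕ)) (I₁ I₂ : Finset ℕ) : Finset ℕ :=
  (BS.restrict B I₂).sup
    (fun C => if BS.IsComponent (BS.restrict B I₂) C ∧ I₂ \ I₁ ⊆ C then C else ∅)

/-- The edge label `μ_B(I₁,I₂) = (max 𝔠(I₂;I₁), (max I₂\I₁, min I₂\I₁))`. -/
noncomputable def BS.mu (B : Finset (Finset ℕ)) (I₁ I₂ : Finset ℕ) : ℤ × ℤ × ℤ :=
  (BS.fmax (BS.comp B I₁ I₂), BS.fmax (I₂ \ I₁), BS.fmin (I₂ \ I₁))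

/-- The partial order `≥` on `Ω = ℤ × ℤ` generated by the relations `ℛ₁` and `ℛ₂`. -/
def BS.omGe (a b : ℤ × ℤ) : Prop :=
  (a.1 ≥ a.2 ∧ a.2 ≥ b.1 ∧ b.1 ≥ b.2) ∨ (a.1 = b.1 ∧ b.1 ≥ a.2 ∧ a.2 ≥ b.2)

/-- The lexicographic order `⪰` on `ℤ × Ω`. -/
def BS.labGe (a b : ℤ × ℤ × ℤ) : Prop := a.1 > b.1 ∨ (a.1 = b.1 ∧ BS.omGe a.2 b.2)

/-- Strict version `≻` of the lexicographic order on labels. -/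
def BS.labGt (a b : ℤ × ℤ × ℤ) : Prop := BS.labGe a b ∧ a ≠ b

/-- `I₂` covers `I₁` in the poset `P̂_B`. -/
def BS.Covers (B : Finset (Finset ℕ)) (S : Finset ℕ) (I₁ I₂ : Finset ℕ) : Prop :=
  I₁ ∈ BS.hatP B S ∧ I₂ ∈ BS.hatP B S ∧ I₁ ⊂ I₂ ∧
    ∀ J ∈ BS.hatP B S, I₁ ⊂ J → ¬ J ⊂ I₂

/-- `c` is a maximal chain of `P̂_B` (a saturated chain from `∅` to `S`). -/
def BS.IsMaxChain (B : Finset (Finset ℕ)) (S : Finset ℕ) (c : List (Finset ℕ)) : Prop :=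
  c.Chain' (BS.Covers B S) ∧ c.head? = some ∅ ∧ c.getLast? = some S

/-- The label sequence of `c` has a decreasing position at (zero-based) index `i`. -/
noncomputable def BS.DecAt (B : Finset (Finset ℕ)) (c : List (Finset ℕ)) (i : ℕ) : Prop :=
  i + 2 < c.length ∧
    BS.labGt (BS.mu B (c.getD i ∅) (c.getD (i + 1) ∅))
      (BS.mu B (c.getD (i + 1) ∅) (c.getD (i + 2) ∅))

/-- The chain `(∅, {x₁,x₂}, {x₁,x₂,x₃,x₄}, …, S)` associated with a permutation `L`. -/
def chainOf (L : List ℕ) : List (Finset ℕ) :=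
  (List.range (L.length / 2 + 1)).map (fun i => (L.take (2 * i)).toFinset)

open Classical

namespace BSAux

variable {S : Finset ℕ} {B : Finset (Finset ℕ)}

/-- natural-number max of a finset, 0 on ∅ -/
def fmaxN (s : Finset ℕ) : ℕ := WithBot.unbotD 0 s.max
def fminN (s : Finset ℕ) : ℕ := WithTop.untopD 0 s.min

lemma mem_restrict {J I : Finset ℕ} : J ∈ BS.restrict B I ↔ J ∈ B ∧ J ⊆ I := by
  simp [BS.restrict]

lemma fmaxN_eq {s : Finset ℕ} {M : ℕ} (hM : M ∈ s) (h : ∀ y ∈ s, y ≤ M) : fmaxN s = M := by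
  have h1 : s.max = (M : WithBot ℕ) :=
    le_antisymm (Finset.max_le (fun y hy => WithBot.coe_le_coe.mpr (h y hy))) (Finset.le_max hM)
  unfold fmaxN; rw [h1]; rfl

lemma fminN_eq {s : Finset ℕ} {m : ℕ} (hm : m ∈ s) (h : ∀ y ∈ s, m ≤ y) : fminN s = m := by
  have h1 : s.min = (m : WithTop ℕ) :=
    le_antisymm (Finset.min_le hm) (Finset.le_min (fun y hy => WithTop.coe_le_coe.mpr (h y hy)))
  unfold fminN; rw [h1]; rfl

lemma fmaxN_mem {s : Finset ℕ} (h : s.Nonempty) : fmaxN s ∈ s := by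
  obtain ⟨M, hM⟩ := Finset.max_of_nonempty h
  have : fmaxN s = M := by simp [fmaxN, hM]
  rw [this]; exact Finset.mem_of_max hM

lemma le_fmaxN {s : Finset ℕ} {y : ℕ} (hy : y ∈ s) : y ≤ fmaxN s := by
  obtain ⟨M, hM⟩ := Finset.max_of_nonempty ⟨y, hy⟩
  have h2 : fmaxN s = M := by simp [fmaxN, hM]
  rw [h2]; exact Finset.le_max_of_eq hy hM

lemma fmaxN_fmax {s : Finset ℕ} : BS.fmax s = (fmaxN s : ℤ) := rfl
lemma fminN_fmin {s : Finset ℕ} : BS.fmin s = (fminN s : ℤ) := rfl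

lemma fmax_eq {s : Finset ℕ} {M : ℕ} (hM : M ∈ s) (h : ∀ y ∈ s, y ≤ M) : BS.fmax s = (M : ℤ) := by
  rw [fmaxN_fmax, fmaxN_eq hM h]
lemma fmin_eq {s : Finset ℕ} {m : ℕ} (hm : m ∈ s) (h : ∀ y ∈ s, m ≤ y) : BS.fmin s = (m : ℤ) := by
  rw [fminN_fmin, fminN_eq hm h]

/-- every element of the restriction is contained in a component -/
lemma exists_comp {I J : Finset ℕ} (hJ : J ∈ BS.restrict B I) :
    ∃ C, BS.IsComponent (BS.restrict B I) C ∧ J ⊆ C := by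
  classical
  set T := (BS.restrict B I).filter (fun K => J ⊆ K) with hT
  have hJT : J ∈ T := by simp [hT, hJ]
  obtain ⟨C, hCT, hCmax⟩ := T.exists_max_image (fun K => K.card) ⟨J, hJT⟩
  rw [hT, Finset.mem_filter] at hCT
  refine ⟨C, ⟨hCT.1, ?_⟩, hCT.2⟩
  intro K hK hCK
  have hKT : K ∈ T := by
    rw [hT, Finset.mem_filter]; exact ⟨hK, hCT.2.trans hCK⟩
  exact (Finset.eq_of_subset_of_card_le hCK (hCmax K hKT)).symm

/-- a member of the restriction meeting a component is inside it -/
lemma comp_absorb (hB : BS.IsBuilding S B) {I C D : Finset ℕ}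
    (hC : BS.IsComponent (BS.restrict B I) C) (hD : D ∈ BS.restrict B I)
    (h : (C ∩ D).Nonempty) : D ⊆ C := by
  have hCB := mem_restrict.mp hC.1
  have hDB := mem_restrict.mp hD
  have hU : C ∪ D ∈ BS.restrict B I := by
    rw [mem_restrict]
    exact ⟨hB.2.2 C hCB.1 D hDB.1 h, Finset.union_subset hCB.2 hDB.2⟩
  have := hC.2 _ hU Finset.subset_union_left
  rw [← this]; exact Finset.subset_union_right

lemma comp_subset {I C : Finset ℕ} (hC : BS.IsComponent (BS.restrict B I) C) : C ⊆ I :=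
  (mem_restrict.mp hC.1).2

lemma singleton_mem_restrict (hB : BS.IsBuilding S B) {I : Finset ℕ} (hI : I ⊆ S) {x : ℕ}
    (hx : x ∈ I) : ({x} : Finset ℕ) ∈ BS.restrict B I := by
  rw [mem_restrict]
  exact ⟨hB.2.1 x (hI hx), Finset.singleton_subset_iff.mpr hx⟩

lemma exists_comp_mem (hB : BS.IsBuilding S B) {I : Finset ℕ} (hI : I ⊆ S) {x : ℕ}
    (hx : x ∈ I) : ∃ C, BS.IsComponent (BS.restrict B I) C ∧ x ∈ C := by
  obtain ⟨C, hC, hsub⟩ := exists_comp (singleton_mem_restrict hB hI hx)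
  exact ⟨C, hC, hsub (Finset.mem_singleton_self x)⟩

/-- evenness of compatible filters -/
lemma even_card_filter (hB : BS.IsBuilding S B) {I : Finset ℕ} (hI : I ⊆ S)
    (hno : BS.NoOddComp B I) (p : ℕ → Prop) [DecidablePred p]
    (hp : ∀ C, BS.IsComponent (BS.restrict B I) C → ∀ x ∈ C, p x → ∀ y ∈ C, p y) :
    Even ((I.filter p).card) := by
  classical
  set comps := (BS.restrict B I).filter
    (fun C => BS.IsComponent (BS.restrict B I) C ∧ ∃ x ∈ C, p x) with hcomps
  have hmem : ∀ C ∈ comps, BS.IsComponent (BS.restrict B I) C ∧ ∃ x ∈ C, p x := by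
    intro C hC; exact (Finset.mem_filter.mp hC).2
  have hunion : I.filter p = comps.biUnion id := by
    ext x
    simp only [Finset.mem_filter, Finset.mem_biUnion, id]
    constructor
    · rintro ⟨hxI, hpx⟩
      obtain ⟨C, hC, hxC⟩ := exists_comp_mem hB hI hxI
      refine ⟨C, ?_, hxC⟩
      rw [hcomps, Finset.mem_filter]
      exact ⟨hC.1, hC, x, hxC, hpx⟩
    · rintro ⟨C, hC, hxC⟩
      obtain ⟨hCcomp, y, hyC, hpy⟩ := hmem C hC
      exact ⟨comp_subset hCcomp hxC, hp C hCcomp y hyC hpy x hxC⟩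
  rw [hunion, Finset.card_biUnion]
  · apply Finset.even_sum
    intro C hC
    obtain ⟨hCcomp, _⟩ := hmem C hC
    exact hno C hCcomp.1 hCcomp
  · intro C hC D hD hCD
    obtain ⟨hCcomp, _⟩ := hmem C hC
    obtain ⟨hDcomp, _⟩ := hmem D hD
    simp only [Function.onFun, id]
    rw [Finset.disjoint_left]
    intro x hxC hxD
    exact hCD (le_antisymm (comp_absorb hB hDcomp hCcomp.1 ⟨x, by simp [hxD, hxC]⟩)
      (comp_absorb hB hCcomp hDcomp.1 ⟨x, by simp [hxD, hxC]⟩))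

lemma even_card_of_noOdd (hB : BS.IsBuilding S B) {I : Finset ℕ} (hI : I ⊆ S)
    (hno : BS.NoOddComp B I) : Even I.card := by
  have := even_card_filter hB hI hno (fun _ => True) (by intros; trivial)
  simpa using this

lemma even_inter (hB : BS.IsBuilding S B) {I I' K : Finset ℕ} (hI' : I' ⊆ S) (hII : I ⊆ I')
    (hno : BS.NoOddComp B I) (hK : BS.IsComponent (BS.restrict B I') K) :
    Even ((K ∩ I).card) := by
  have h := even_card_filter hB (hII.trans hI') hno (fun x => x ∈ K) ?_
  · have : I.filter (fun x => x ∈ K) = K ∩ I := by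
      ext x; simp [Finset.mem_inter, and_comm]
    rwa [this] at h
  · intro C hC x hxC hxK y hyC
    have hCr : C ∈ BS.restrict B I' := by
      rw [mem_restrict]
      exact ⟨(mem_restrict.mp hC.1).1, (comp_subset hC).trans hII⟩
    exact comp_absorb hB hK hCr ⟨x, by simp [hxK, hxC]⟩ hyC

end BSAux
namespace BSAux

variable {S : Finset ℕ} {B : Finset (Finset ℕ)}

lemma noOdd_pair (hB : BS.IsBuilding S B) {I : Finset ℕ} {a b : ℕ}
    (hsub : I ∪ {a, b} ⊆ S) (hno : BS.NoOddComp B I) (ha : a ∉ I) (hb : b ∉ I) (hab : a ≠ b)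
    {J : Finset ℕ} (hJ : J ∈ B) (hJsub : J ⊆ I ∪ {a, b}) (haJ : a ∈ J) (hbJ : b ∈ J) :
    BS.NoOddComp B (I ∪ {a, b}) := by
  intro K hKmem hK
  have hJr : J ∈ BS.restrict B (I ∪ {a, b}) := mem_restrict.mpr ⟨hJ, hJsub⟩
  have hKsub : K ⊆ I ∪ {a, b} := (mem_restrict.mp hKmem).2
  have h1 : Even ((K ∩ I).card) := even_inter hB hsub Finset.subset_union_left hno hK
  have hsplit : K.card = (K ∩ I).card + (K \ I).card := by
    rw [Finset.card_inter_add_card_sdiff]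
  have h2 : Even ((K \ I).card) := by
    by_cases haK : a ∈ K
    · have hJK : J ⊆ K := comp_absorb hB hK hJr ⟨a, by simp [haK, haJ]⟩
      have : K \ I = {a, b} := by
        apply Finset.Subset.antisymm
        · intro x hx
          rcases Finset.mem_sdiff.mp hx with ⟨hx1, hx2⟩
          rcases Finset.mem_union.mp (hKsub hx1) with h | h
          · exact absurd h hx2
          · exact h
        · intro x hx
          rcases Finset.mem_insert.mp hx with rfl | hx
          · exact Finset.mem_sdiff.mpr ⟨haK, ha⟩
          · rw [Finset.mem_singleton] at hx; subst hx
            exact Finset.mem_sdiff.mpr ⟨hJK hbJ, hb⟩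
      rw [this, Finset.card_pair hab]; exact even_two
    · by_cases hbK : b ∈ K
      · have hJK : J ⊆ K := comp_absorb hB hK hJr ⟨b, by simp [hbK, hbJ]⟩
        exact absurd (hJK haJ) haK
      · have : K \ I = ∅ := by
          rw [Finset.sdiff_eq_empty_iff_subset]
          intro x hx
          rcases Finset.mem_union.mp (hKsub hx) with h | h
          · exact h
          · rcases Finset.mem_insert.mp h with rfl | h
            · exact absurd hx haK
            · rw [Finset.mem_singleton] at h; subst h; exact absurd hx hbK
        rw [this]; simp
  rw [hsplit]; exact h1.add h2

lemma exists_pair_step (hB : BS.IsBuilding S B) (hch : BS.IsChordal B) {I₁ I₂ : Finset ℕ}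
    (h2 : I₂ ⊆ S) (h12 : I₁ ⊆ I₂) (hne : I₁ ≠ I₂)
    (hno1 : BS.NoOddComp B I₁) (hno2 : BS.NoOddComp B I₂) :
    ∃ a b, a ∈ I₂ \ I₁ ∧ b ∈ I₂ \ I₁ ∧ b < a ∧ BS.NoOddComp B (I₁ ∪ {a, b}) := by
  obtain ⟨d, hd⟩ : (I₂ \ I₁).Nonempty := by
    rw [Finset.sdiff_nonempty]; intro h; exact hne (Finset.Subset.antisymm h12 h)
  have hdI2 : d ∈ I₂ := (Finset.mem_sdiff.mp hd).1
  obtain ⟨C, hC, hdC⟩ := exists_comp_mem hB h2 hdI2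
  have hCcard : Even C.card := hno2 C hC.1 hC
  have hCI1 : Even ((C ∩ I₁).card) := even_inter hB h2 h12 hno1 hC
  have hCsplit : C.card = (C ∩ I₁).card + (C \ I₁).card := by
    rw [Finset.card_inter_add_card_sdiff]
  have hCD : Even ((C \ I₁).card) := by
    rcases hCcard with ⟨m, hm⟩
    rcases hCI1 with ⟨l, hl⟩
    exact ⟨m - l, by omega⟩
  have hdCD : d ∈ C \ I₁ := Finset.mem_sdiff.mpr ⟨hdC, (Finset.mem_sdiff.mp hd).2⟩
  have hcard2 : 2 ≤ (C \ I₁).card := by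
    rcases hCD with ⟨m, hm⟩
    have : 0 < (C \ I₁).card := Finset.card_pos.mpr ⟨d, hdCD⟩
    omega
  -- take the two largest elements of C \ I₁
  set D := C \ I₁ with hD
  have hDne : D.Nonempty := ⟨d, hdCD⟩
  set a := fmaxN D with hadef
  have haD : a ∈ D := fmaxN_mem hDne
  have hEne : (D.erase a).Nonempty := by
    rw [← Finset.card_pos, Finset.card_erase_of_mem haD]; omega
  set b := fmaxN (D.erase a) with hbdef
  have hbE : b ∈ D.erase a := fmaxN_mem hEne
  have hbD : b ∈ D := Finset.mem_of_mem_erase hbE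
  have hba : b < a := lt_of_le_of_ne (le_fmaxN hbD) (Finset.ne_of_mem_erase hbE)
  have hCB : C ∈ B := (mem_restrict.mp hC.1).1
  have hCsubI2 : C ⊆ I₂ := comp_subset hC
  have haC : a ∈ C := (Finset.mem_sdiff.mp haD).1
  have hbC : b ∈ C := (Finset.mem_sdiff.mp hbD).1
  set J := C.filter (fun x => b ≤ x) with hJdef
  have hJB : J ∈ B := hch C hCB b hbC
  have haJ : a ∈ J := by rw [hJdef, Finset.mem_filter]; exact ⟨haC, le_of_lt hba⟩
  have hbJ : b ∈ J := by rw [hJdef, Finset.mem_filter]; exact ⟨hbC, le_refl b⟩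
  have hJsub : J ⊆ I₁ ∪ {a, b} := by
    intro x hx
    rw [hJdef, Finset.mem_filter] at hx
    obtain ⟨hxC, hbx⟩ := hx
    by_cases hxI1 : x ∈ I₁
    · exact Finset.mem_union_left _ hxI1
    · have hxD : x ∈ D := Finset.mem_sdiff.mpr ⟨hxC, hxI1⟩
      by_cases hxa : x = a
      · subst hxa; exact Finset.mem_union_right _ (by simp)
      · have : x ∈ D.erase a := Finset.mem_erase.mpr ⟨hxa, hxD⟩
        have : x ≤ b := le_fmaxN this
        have : x = b := le_antisymm this hbx
        subst this; exact Finset.mem_union_right _ (by simp)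
  have haI2 : a ∈ I₂ \ I₁ := by
    rw [Finset.mem_sdiff]
    exact ⟨hCsubI2 haC, (Finset.mem_sdiff.mp haD).2⟩
  have hbI2 : b ∈ I₂ \ I₁ := by
    rw [Finset.mem_sdiff]
    exact ⟨hCsubI2 hbC, (Finset.mem_sdiff.mp hbD).2⟩
  refine ⟨a, b, haI2, hbI2, hba, ?_⟩
  apply noOdd_pair hB ?_ hno1 (Finset.mem_sdiff.mp haD).2 (Finset.mem_sdiff.mp hbD).2
    (Nat.ne_of_gt hba) hJB hJsub haJ hbJ
  apply Finset.union_subset (h12.trans h2)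
  intro x hx
  rcases Finset.mem_insert.mp hx with rfl | hx
  · exact h2 (hCsubI2 haC)
  · rw [Finset.mem_singleton] at hx; subst hx; exact h2 (hCsubI2 hbC)

lemma covers_iff (hB : BS.IsBuilding S B) (hch : BS.IsChordal B) {I₁ I₂ : Finset ℕ} :
    BS.Covers B S I₁ I₂ ↔
      I₁ ∈ BS.hatP B S ∧ I₂ ∈ BS.hatP B S ∧ I₁ ⊂ I₂ ∧ (I₂ \ I₁).card = 2 := by
  constructor
  · rintro ⟨h1, h2, h12, hmax⟩
    refine ⟨h1, h2, h12, ?_⟩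
    have hsub := h12.subset
    have hdne : (I₂ \ I₁).Nonempty := by
      rw [Finset.sdiff_nonempty]; exact fun h => h12.ne (Finset.Subset.antisymm hsub h)
    have heven : Even ((I₂ \ I₁).card) := by
      rw [Finset.card_sdiff_of_subset hsub]
      have e1 := even_card_of_noOdd hB h1.1 h1.2
      have e2 := even_card_of_noOdd hB h2.1 h2.2
      exact (Nat.even_sub (Finset.card_le_card hsub)).mpr (by simp [e1, e2])
    by_contra hne2
    have hge4 : 4 ≤ (I₂ \ I₁).card := by
      rcases heven with ⟨m, hm⟩
      have : 0 < (I₂ \ I₁).card := Finset.card_pos.mpr hdne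
      omega
    obtain ⟨a, b, haD, hbD, hba, hnoJ⟩ :=
      exists_pair_step hB hch h2.1 hsub h12.ne h1.2 h2.2
    have hJsubS : I₁ ∪ {a, b} ⊆ S := by
      apply Finset.union_subset h1.1
      intro x hx
      rcases Finset.mem_insert.mp hx with rfl | hx
      · exact h2.1 (Finset.mem_sdiff.mp haD).1
      · rw [Finset.mem_singleton] at hx; subst hx
        exact h2.1 (Finset.mem_sdiff.mp hbD).1
    have hJhat : I₁ ∪ {a, b} ∈ BS.hatP B S := ⟨hJsubS, hnoJ⟩
    have hJsubI2 : I₁ ∪ {a, b} ⊆ I₂ := by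
      apply Finset.union_subset hsub
      intro x hx
      rcases Finset.mem_insert.mp hx with rfl | hx
      · exact (Finset.mem_sdiff.mp haD).1
      · rw [Finset.mem_singleton] at hx; subst hx
        exact (Finset.mem_sdiff.mp hbD).1
    have hI1J : I₁ ⊂ I₁ ∪ {a, b} := by
      apply Finset.ssubset_iff_subset_ne.mpr ⟨Finset.subset_union_left, ?_⟩
      intro h
      have : a ∈ I₁ := by rw [h]; exact Finset.mem_union_right _ (by simp)
      exact (Finset.mem_sdiff.mp haD).2 this
    have hcardJ : (I₁ ∪ {a, b}).card ≤ I₁.card + 2 := by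
      apply le_trans (Finset.card_union_le _ _)
      have : ({a, b} : Finset ℕ).card = 2 := Finset.card_pair (Nat.ne_of_gt hba)
      omega
    have hJssI2 : I₁ ∪ {a, b} ⊂ I₂ := by
      apply Finset.ssubset_iff_subset_ne.mpr ⟨hJsubI2, ?_⟩
      intro h
      have hc2 : I₂.card = I₁.card + (I₂ \ I₁).card := by
        have := Finset.card_sdiff_of_subset hsub
        have := Finset.card_le_card hsub
        omega
      have : I₂.card ≤ I₁.card + 2 := h ▸ hcardJ
      omega
    exact hmax _ hJhat hI1J hJssI2
  · rintro ⟨h1, h2, h12, hcard⟩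
    refine ⟨h1, h2, h12, ?_⟩
    rintro J hJ hIJ hJI2
    have e1 := even_card_of_noOdd hB h1.1 h1.2
    have eJ := even_card_of_noOdd hB hJ.1 hJ.2
    have hJD : J \ I₁ ⊆ I₂ \ I₁ := Finset.sdiff_subset_sdiff hJI2.subset (le_refl _)
    have hJDne : (J \ I₁).Nonempty := by
      rw [Finset.sdiff_nonempty]; exact fun h => hIJ.ne (Finset.Subset.antisymm hIJ.subset h)
    have hproper : J \ I₁ ≠ I₂ \ I₁ := by
      intro h
      apply hJI2.ne
      have h1J := hIJ.subset
      have h1I2 := h12.subset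
      apply Finset.Subset.antisymm hJI2.subset
      intro x hx
      by_cases hxI1 : x ∈ I₁
      · exact h1J hxI1
      · have : x ∈ I₂ \ I₁ := Finset.mem_sdiff.mpr ⟨hx, hxI1⟩
        rw [← h] at this
        exact (Finset.mem_sdiff.mp this).1
    have hlt : (J \ I₁).card < 2 := by
      rw [← hcard]
      exact Finset.card_lt_card (Finset.ssubset_iff_subset_ne.mpr ⟨hJD, hproper⟩)
    have hevenJD : Even ((J \ I₁).card) := by
      rw [Finset.card_sdiff_of_subset hIJ.subset]
      exact (Nat.even_sub (Finset.card_le_card hIJ.subset)).mpr (by simp [e1, eJ])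
    have hpos : 0 < (J \ I₁).card := Finset.card_pos.mpr hJDne
    rcases hevenJD with ⟨m, hm⟩
    omega

lemma comp_eq (hB : BS.IsBuilding S B) {I₁ I₂ C : Finset ℕ}
    (hC : BS.IsComponent (BS.restrict B I₂) C) (hsub : I₂ \ I₁ ⊆ C)
    (hne : (I₂ \ I₁).Nonempty) : BS.comp B I₁ I₂ = C := by
  unfold BS.comp
  refine le_antisymm (Finset.sup_le fun D hD => ?_) ?_
  · by_cases h : BS.IsComponent (BS.restrict B I₂) D ∧ I₂ \ I₁ ⊆ D
    · rw [if_pos h]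
      obtain ⟨d, hd⟩ := hne
      exact comp_absorb hB hC h.1.1 ⟨d, by simp [hsub hd, h.2 hd]⟩
    · rw [if_neg h]; exact bot_le
  · have h0 := Finset.le_sup
      (f := fun D => if BS.IsComponent (BS.restrict B I₂) D ∧ I₂ \ I₁ ⊆ D then D else ∅) hC.1
    rwa [if_pos (⟨hC, hsub⟩ : BS.IsComponent (BS.restrict B I₂) C ∧ I₂ \ I₁ ⊆ C)] at h0

lemma mu_eq (hB : BS.IsBuilding S B) {I₁ I₂ C : Finset ℕ} {a b M : ℕ}
    (hC : BS.IsComponent (BS.restrict B I₂) C)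
    (hdiff : I₂ \ I₁ = {a, b}) (hba : b < a) (haC : a ∈ C) (hbC : b ∈ C)
    (hM : M ∈ C) (hMmax : ∀ y ∈ I₂, y ≤ M) :
    BS.mu B I₁ I₂ = ((M : ℤ), (a : ℤ), (b : ℤ)) := by
  have hCsub := comp_subset hC
  have hcomp : BS.comp B I₁ I₂ = C := by
    apply comp_eq hB hC
    · rw [hdiff]
      intro x hx
      rcases Finset.mem_insert.mp hx with rfl | hx
      · exact haC
      · rw [Finset.mem_singleton] at hx; subst hx; exact hbC
    · rw [hdiff]; exact ⟨a, by simp⟩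
  unfold BS.mu
  rw [hcomp, hdiff]
  have h1 : BS.fmax C = (M : ℤ) := fmax_eq hM (fun y hy => hMmax y (hCsub hy))
  have h2 : BS.fmax {a, b} = (a : ℤ) := by
    apply fmax_eq (by simp)
    intro y hy
    rcases Finset.mem_insert.mp hy with rfl | hy
    · exact le_refl _
    · rw [Finset.mem_singleton] at hy; subst hy; exact le_of_lt hba
  have h3 : BS.fmin {a, b} = (b : ℤ) := by
    apply fmin_eq (by simp)
    intro y hy
    rcases Finset.mem_insert.mp hy with rfl | hy
    · exact le_of_lt hba
    · rw [Finset.mem_singleton] at hy; subst hy; exact le_refl _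
  rw [h1, h2, h3]

end BSAux
namespace BSAux

variable {S : Finset ℕ} {B : Finset (Finset ℕ)}

lemma getD_eq {L : List ℕ} {j : ℕ} (h : j < L.length) : L.getD j 0 = L[j] := by
  simp [List.getD_eq_getElem?_getD, List.getElem?_eq_getElem, h]

lemma getD_ne {L : List ℕ} (hnd : L.Nodup) {i j : ℕ} (hi : i < L.length) (hj : j < L.length)
    (hij : i ≠ j) : L.getD i 0 ≠ L.getD j 0 := by
  rw [getD_eq hi, getD_eq hj]
  intro h
  exact hij ((List.Nodup.getElem_inj_iff hnd).mp h)

lemma take_succ_eq {L : List ℕ} {j : ℕ} (h : j < L.length) :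
    L.take (j + 1) = L.take j ++ [L.getD j 0] := by
  rw [List.take_succ, getD_eq h]
  simp [List.getElem?_eq_getElem, h]

lemma toFinset_take_succ {L : List ℕ} {j : ℕ} (h : j < L.length) :
    (L.take (j + 1)).toFinset = insert (L.getD j 0) (L.take j).toFinset := by
  rw [take_succ_eq h]
  ext x
  simp [or_comm]

lemma getD_notmem_take {L : List ℕ} (hnd : L.Nodup) {j : ℕ} (h : j < L.length) :
    L.getD j 0 ∉ (L.take j).toFinset := by
  have h1 : (L.take (j+1)).Nodup := (List.take_sublist _ _).nodup hnd
  rw [take_succ_eq h] at h1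
  rw [List.nodup_append] at h1
  intro hmem
  rw [List.mem_toFinset] at hmem
  exact h1.2.2 _ hmem _ (List.mem_singleton_self _) rfl

lemma mem_take_mono {L : List ℕ} {m n : ℕ} (h : m ≤ n) {x : ℕ} (hx : x ∈ L.take m) :
    x ∈ L.take n := by
  have : L.take m = List.take m (L.take n) := by
    rw [List.take_take, min_eq_left h]
  rw [this] at hx
  exact List.take_subset _ _ hx

lemma toFinset_take_mono {L : List ℕ} {m n : ℕ} (h : m ≤ n) :
    (L.take m).toFinset ⊆ (L.take n).toFinset := by
  intro x hx
  rw [List.mem_toFinset] at *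
  exact mem_take_mono h hx

lemma getD_mem_take {L : List ℕ} {j : ℕ} (h : j < L.length) :
    L.getD j 0 ∈ (L.take (j + 1)).toFinset := by
  rw [toFinset_take_succ h]; exact Finset.mem_insert_self _ _

lemma toFinset_take_subset {L : List ℕ} (m : ℕ) : (L.take m).toFinset ⊆ L.toFinset := by
  intro x hx
  rw [List.mem_toFinset] at *
  exact List.take_subset _ _ hx

/-- the two new elements of an even step are connected to each other and to the prefix max -/
lemma connect (hB : BS.IsBuilding S B) {L : List ℕ} (hbp : BS.IsBPerm B S L)
    (halt : BS.IsAlternating L) {i : ℕ} (h : 2 * i + 1 < L.length) :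
    ∃ C M, BS.IsComponent (BS.restrict B (L.take (2 * i + 2)).toFinset) C ∧
      L.getD (2 * i) 0 ∈ C ∧ L.getD (2 * i + 1) 0 ∈ C ∧ M ∈ C ∧
      ∀ y ∈ (L.take (2 * i + 2)).toFinset, y ≤ M := by
  obtain ⟨C, hC, hbC, M, hMC, hMmax⟩ := hbp.2 (2 * i + 1) h
  obtain ⟨C', hC', haC', M', hM'C', hM'max⟩ := hbp.2 (2 * i) (by omega)
  have hba : L.getD (2 * i + 1) 0 < L.getD (2 * i) 0 := (halt (2 * i) (by omega)).1 (by omega)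
  have hstep : (2 : ℕ) * i + 1 + 1 = 2 * i + 2 := rfl
  rw [hstep] at hC hMmax
  have hstep' : (2 : ℕ) * i + 0 + 1 = 2 * i + 1 := rfl
  have haP : L.getD (2 * i) 0 ∈ (L.take (2 * i + 1)).toFinset := getD_mem_take (by omega)
  have hsub12 : (L.take (2 * i + 1)).toFinset ⊆ (L.take (2 * i + 2)).toFinset :=
    toFinset_take_mono (by omega)
  have hMeq : M = M' := by
    have hMP : M ∈ (L.take (2 * i + 2)).toFinset := comp_subset hC hMC
    rw [toFinset_take_succ h] at hMP
    rcases Finset.mem_insert.mp hMP with hMb | hMP1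
    · exfalso
      have := hMmax _ (hsub12 haP)
      omega
    · exact le_antisymm (hM'max M hMP1) (hMmax M' (hsub12 (comp_subset hC' hM'C')))
  have hC'r : C' ∈ BS.restrict B (L.take (2 * i + 2)).toFinset := by
    rw [mem_restrict]
    exact ⟨(mem_restrict.mp hC'.1).1, (comp_subset hC').trans hsub12⟩
  have hC'C : C' ⊆ C := by
    apply comp_absorb hB hC hC'r
    refine ⟨M, ?_⟩
    rw [Finset.mem_inter]
    exact ⟨hMC, hMeq ▸ hM'C'⟩
  exact ⟨C, M, hC, hC'C haC', hbC, hMC, hMmax⟩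

lemma noOdd_empty (hB : BS.IsBuilding S B) : BS.NoOddComp B ∅ := by
  intro K hK _
  rw [mem_restrict] at hK
  have := (hB.1 K hK.1).2
  rw [Finset.subset_empty.mp hK.2] at this
  simp at this

lemma take_pair_union {L : List ℕ} (hnd : L.Nodup) {i : ℕ} (h : 2 * i + 1 < L.length) :
    (L.take (2 * i + 2)).toFinset
      = (L.take (2 * i)).toFinset ∪ {L.getD (2 * i) 0, L.getD (2 * i + 1) 0} := by
  have e1 : (2 : ℕ) * i + 0 + 1 = 2 * i + 1 := rfl
  rw [toFinset_take_succ h, toFinset_take_succ (show 2 * i < L.length by omega)]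
  ext x
  simp only [Finset.mem_insert, Finset.mem_union, Finset.mem_singleton]
  tauto

lemma pair_props {L : List ℕ} (hnd : L.Nodup) {i : ℕ} (h : 2 * i + 1 < L.length) :
    L.getD (2 * i) 0 ∉ (L.take (2 * i)).toFinset ∧
    L.getD (2 * i + 1) 0 ∉ (L.take (2 * i)).toFinset ∧
    L.getD (2 * i) 0 ≠ L.getD (2 * i + 1) 0 := by
  refine ⟨getD_notmem_take hnd (by omega), ?_, getD_ne hnd (by omega) h (by omega)⟩
  intro hmem
  exact getD_notmem_take hnd h (toFinset_take_mono (by omega) hmem)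

lemma prefix_noOdd (hB : BS.IsBuilding S B) {L : List ℕ} (hbp : BS.IsBPerm B S L)
    (halt : BS.IsAlternating L) : ∀ i, 2 * i ≤ L.length →
      BS.NoOddComp B (L.take (2 * i)).toFinset := by
  intro i
  induction i with
  | zero => intro _; simpa using noOdd_empty hB
  | succ n ih =>
    intro hlen
    have h : 2 * n + 1 < L.length := by omega
    have hnd := hbp.1.1
    obtain ⟨C, M, hC, haC, hbC, hMC, hMmax⟩ := connect hB hbp halt h
    obtain ⟨hanotin, hbnotin, hab⟩ := pair_props hnd h
    have hunion := take_pair_union hnd h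
    have hCr := mem_restrict.mp hC.1
    have hres : 2 * (n + 1) = 2 * n + 2 := by ring
    rw [hres, hunion]
    exact noOdd_pair hB
      (by rw [← hunion]; exact (toFinset_take_subset _).trans (le_of_eq hbp.1.2))
      (ih (by omega)) hanotin hbnotin hab hCr.1 (hunion ▸ hCr.2) haC hbC

end BSAux
namespace BSAux

variable {S : Finset ℕ} {B : Finset (Finset ℕ)}

lemma getD_eq' {α : Type*} {L : List α} {d : α} {j : ℕ} (h : j < L.length) :
    L.getD j d = L[j] := by
  simp [List.getD_eq_getElem?_getD, List.getElem?_eq_getElem, h]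

lemma chain'_of_getD {α : Type*} (R : α → α → Prop) (l : List α) (d : α)
    (h : ∀ i, i + 1 < l.length → R (l.getD i d) (l.getD (i + 1) d)) : l.Chain' R := by
  rw [List.Chain', List.isChain_iff_getElem]
  intro i hi
  have hi' : i + 1 < l.length := by omega
  have := h i hi'
  rw [getD_eq' (by omega), getD_eq' hi'] at this
  simpa [List.get_eq_getElem] using this

lemma head?_eq_getD {α : Type*} {l : List α} (h : l ≠ []) (d : α) :
    l.head? = some (l.getD 0 d) := by
  cases l with
  | nil => exact absurd rfl h
  | cons a t => simp [List.getD]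

lemma getLast?_eq_getD {α : Type*} {l : List α} (h : l ≠ []) (d : α) :
    l.getLast? = some (l.getD (l.length - 1) d) := by
  rw [List.getLast?_eq_getElem?]
  have hl : l.length - 1 < l.length := by
    have := List.length_pos_iff.mpr h; omega
  simp [List.getD_eq_getElem?_getD, List.getElem?_eq_getElem, hl]

lemma chainOf_length (L : List ℕ) : (chainOf L).length = L.length / 2 + 1 := by
  simp [chainOf]

lemma chainOf_getD {L : List ℕ} {i : ℕ} (h : i < L.length / 2 + 1) :
    (chainOf L).getD i ∅ = (L.take (2 * i)).toFinset := by
  unfold chainOf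
  rw [List.getD_eq_getElem?_getD]
  simp [List.getElem?_map, List.getElem?_range, h]

lemma diff_eq {L : List ℕ} (hnd : L.Nodup) {i : ℕ} (h : 2 * i + 1 < L.length) :
    (L.take (2 * i + 2)).toFinset \ (L.take (2 * i)).toFinset
      = {L.getD (2 * i) 0, L.getD (2 * i + 1) 0} := by
  obtain ⟨ha, hb, hab⟩ := pair_props hnd h
  rw [take_pair_union hnd h]
  ext x
  simp only [Finset.mem_sdiff, Finset.mem_union, Finset.mem_insert, Finset.mem_singleton]
  constructor
  · tauto
  · rintro (rfl | rfl)
    · exact ⟨Or.inr (Or.inl rfl), ha⟩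
    · exact ⟨Or.inr (Or.inr rfl), hb⟩

lemma mu_step (hB : BS.IsBuilding S B) {L : List ℕ} (hbp : BS.IsBPerm B S L)
    (halt : BS.IsAlternating L) {i : ℕ} (h : 2 * i + 1 < L.length) :
    ∃ M : ℕ, BS.mu B (L.take (2 * i)).toFinset (L.take (2 * i + 2)).toFinset
        = ((M : ℤ), ((L.getD (2 * i) 0 : ℕ) : ℤ), ((L.getD (2 * i + 1) 0 : ℕ) : ℤ))
      ∧ M ∈ (L.take (2 * i + 2)).toFinset ∧ ∀ y ∈ (L.take (2 * i + 2)).toFinset, y ≤ M := by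
  obtain ⟨C, M, hC, haC, hbC, hMC, hMmax⟩ := connect hB hbp halt h
  have hba : L.getD (2 * i + 1) 0 < L.getD (2 * i) 0 := (halt (2 * i) (by omega)).1 (by omega)
  exact ⟨M, mu_eq hB hC (diff_eq hbp.1.1 h) hba haC hbC hMC hMmax, comp_subset hC hMC, hMmax⟩

lemma prefix_hatP (hB : BS.IsBuilding S B) {L : List ℕ} (hbp : BS.IsBPerm B S L)
    (halt : BS.IsAlternating L) {i : ℕ} (h : 2 * i ≤ L.length) :
    (L.take (2 * i)).toFinset ∈ BS.hatP B S := by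
  refine ⟨?_, prefix_noOdd hB hbp halt i h⟩
  rw [← hbp.1.2]
  exact toFinset_take_subset _

lemma covers_step (hB : BS.IsBuilding S B) (hch : BS.IsChordal B) {L : List ℕ}
    (hbp : BS.IsBPerm B S L) (halt : BS.IsAlternating L) {i : ℕ} (h : 2 * i + 1 < L.length) :
    BS.Covers B S (L.take (2 * i)).toFinset (L.take (2 * i + 2)).toFinset := by
  rw [covers_iff hB hch]
  obtain ⟨ha, hb, hab⟩ := pair_props hbp.1.1 h
  refine ⟨prefix_hatP hB hbp halt (by omega), ?_, ?_, ?_⟩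
  · have h2 : (L.take (2 * (i + 1))).toFinset ∈ BS.hatP B S :=
      prefix_hatP hB hbp halt (by omega)
    have : 2 * (i + 1) = 2 * i + 2 := by ring
    rwa [this] at h2
  · refine Finset.ssubset_iff_subset_ne.mpr ⟨toFinset_take_mono (by omega), ?_⟩
    intro heq
    apply ha
    rw [heq]
    exact toFinset_take_mono (by omega) (getD_mem_take (by omega))
  · rw [diff_eq hbp.1.1 h]
    exact Finset.card_pair hab

lemma forward (hB : BS.IsBuilding S B) (hch : BS.IsChordal B) (hno : BS.NoOddComp B S)
    {L : List ℕ} (hbp : BS.IsBPerm B S L) (halt : BS.IsAlternating L) :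
    BS.IsMaxChain B S (chainOf L) ∧ ∀ i, ¬ BS.DecAt B (chainOf L) i := by
  have hnd := hbp.1.1
  have hlen : L.length = S.card := by
    rw [← hbp.1.2]; exact (List.toFinset_card_of_nodup hnd).symm
  have hEvenL : Even L.length := by
    rw [hlen]; exact even_card_of_noOdd hB (Finset.Subset.refl S) hno
  have h2k : 2 * (L.length / 2) = L.length := by
    rcases hEvenL with ⟨m, hm⟩; omega
  have hCne : chainOf L ≠ [] := by
    intro h
    have := chainOf_length L
    rw [h] at this
    simp at this
  refine ⟨⟨?_, ?_, ?_⟩, ?_⟩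
  · apply chain'_of_getD _ _ ∅
    intro i hi
    rw [chainOf_length] at hi
    have hi' : 2 * i + 1 < L.length := by omega
    rw [chainOf_getD (by omega), chainOf_getD (by omega)]
    have : 2 * (i + 1) = 2 * i + 2 := by ring
    rw [this]
    exact covers_step hB hch hbp halt hi'
  · rw [head?_eq_getD hCne ∅, chainOf_getD (by omega)]
    simp
  · rw [getLast?_eq_getD hCne ∅, chainOf_length]
    have : L.length / 2 + 1 - 1 = L.length / 2 := by omega
    rw [this, chainOf_getD (by omega), h2k, List.take_length, hbp.1.2]
  · rintro i ⟨hilen, hgt⟩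
    rw [chainOf_length] at hilen
    have hk1 : 2 * i + 1 < L.length := by omega
    have hk2 : 2 * (i + 1) + 1 < L.length := by omega
    rw [chainOf_getD (by omega), chainOf_getD (by omega), chainOf_getD (by omega)] at hgt
    have e1 : 2 * (i + 1) = 2 * i + 2 := by ring
    have e2 : 2 * (i + 2) = 2 * i + 2 + 2 := by ring
    rw [e1, e2] at hgt
    obtain ⟨M, hmu, hMmem, hMmax⟩ := mu_step hB hbp halt hk1
    obtain ⟨M', hmu', hM'mem, hM'max⟩ := mu_step hB hbp halt hk2
    rw [e1] at hmu' hM'mem hM'max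
    rw [hmu, hmu'] at hgt
    unfold BS.labGt BS.labGe BS.omGe at hgt
    dsimp only at hgt
    have hMM' : M ≤ M' := by
      apply hM'max
      exact toFinset_take_mono (by omega) hMmem
    obtain ⟨hge, hne⟩ := hgt
    rcases hge with hgt1 | ⟨heq, hom⟩
    · simp only [gt_iff_lt] at hgt1
      have : (M' : ℤ) < M := hgt1
      omega
    · -- hom : omGe (a_i, b_i) (a_{i+1}, b_{i+1})
      have hastep : L.getD (2 * i + 1) 0 < L.getD (2 * i + 2) 0 :=
        (halt (2 * i + 1) (by omega)).2 (by omega)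
      rcases hom with ⟨_, h21, _⟩ | ⟨haa, _, _⟩
      · have : ((L.getD (2 * i + 2) 0 : ℕ) : ℤ) ≤ ((L.getD (2 * i + 1) 0 : ℕ) : ℤ) := h21
        omega
      · have : L.getD (2 * i) 0 = L.getD (2 * i + 2) 0 := by exact_mod_cast haa
        exact getD_ne hnd (by omega) (by omega) (by omega) this

end BSAux
namespace BSAux

variable {S : Finset ℕ} {B : Finset (Finset ℕ)}

lemma fminN_mem {s : Finset ℕ} (h : s.Nonempty) : fminN s ∈ s := by
  obtain ⟨m, hm⟩ := Finset.min_of_nonempty h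
  have : fminN s = m := by unfold fminN; rw [hm]; rfl
  rw [this]; exact Finset.mem_of_min hm

lemma fminN_le {s : Finset ℕ} {y : ℕ} (hy : y ∈ s) : fminN s ≤ y := by
  obtain ⟨m, hm⟩ := Finset.min_of_nonempty ⟨y, hy⟩
  have h2 : fminN s = m := by unfold fminN; rw [hm]; rfl
  rw [h2]; exact Finset.min_le_of_eq hy hm

lemma chain'_getD {α : Type*} {R : α → α → Prop} {l : List α} (h : l.Chain' R) (d : α) :
    ∀ i, i + 1 < l.length → R (l.getD i d) (l.getD (i + 1) d) := by
  intro i hi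
  rw [List.Chain', List.isChain_iff_getElem] at h
  have := h i (by omega)
  rw [getD_eq' (by omega), getD_eq' hi]
  simpa [List.get_eq_getElem] using this

lemma getD_map_range {α : Type*} (f : ℕ → α) (d : α) {m i : ℕ} (h : i < m) :
    ((List.range m).map f).getD i d = f i := by
  rw [List.getD_eq_getElem?_getD]
  simp [List.getElem?_map, List.getElem?_range, h]

lemma map_range_succ_toFinset (f : ℕ → ℕ) (m : ℕ) :
    ((List.range (m + 1)).map f).toFinset = insert (f m) ((List.range m).map f).toFinset := by
  rw [List.range_succ]
  ext x
  simp [or_comm]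

/-- a subset of a pair with positive even cardinality is the whole pair -/
lemma eq_pair_of_even {K : Finset ℕ} {a b : ℕ} (hsub : K ⊆ {a, b}) (hab : a ≠ b)
    (heven : Even K.card) (hne : K.Nonempty) : K = {a, b} := by
  have h2 : K.card ≤ 2 := by
    calc K.card ≤ ({a, b} : Finset ℕ).card := Finset.card_le_card hsub
    _ = 2 := Finset.card_pair hab
  have h0 : 0 < K.card := Finset.card_pos.mpr hne
  have : K.card = 2 := by rcases heven with ⟨m, hm⟩; omega
  exact Finset.eq_of_subset_of_card_le hsub (by rw [this, Finset.card_pair hab])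

section ChainFacts

variable {c : List (Finset ℕ)}

lemma chain_ne (hmc : BS.IsMaxChain B S c) : c ≠ [] := by
  intro h
  have := hmc.2.1
  rw [h] at this
  simp at this

lemma chain_cov (hmc : BS.IsMaxChain B S c) : ∀ i, i + 1 < c.length →
    BS.Covers B S (c.getD i ∅) (c.getD (i + 1) ∅) := chain'_getD hmc.1 ∅

lemma chain_zero (hmc : BS.IsMaxChain B S c) : c.getD 0 ∅ = ∅ := by
  have := hmc.2.1
  rw [head?_eq_getD (chain_ne hmc) ∅] at this
  exact Option.some_injective _ this

lemma chain_last (hmc : BS.IsMaxChain B S c) : c.getD (c.length - 1) ∅ = S := by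
  have := hmc.2.2
  rw [getLast?_eq_getD (chain_ne hmc) ∅] at this
  exact Option.some_injective _ this

lemma chain_card (hB : BS.IsBuilding S B) (hch : BS.IsChordal B)
    (hmc : BS.IsMaxChain B S c) : ∀ i, i < c.length → (c.getD i ∅).card = 2 * i := by
  intro i
  induction i with
  | zero => intro _; rw [chain_zero hmc]; simp
  | succ m ih =>
    intro h
    have hcov := chain_cov hmc m (by omega)
    rw [covers_iff hB hch] at hcov
    obtain ⟨h1, h2, h12, hcard⟩ := hcov
    have := Finset.card_sdiff_of_subset h12.subset
    have hle := Finset.card_le_card h12.subset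
    have := ih (by omega)
    omega

lemma chain_mono (hmc : BS.IsMaxChain B S c) : ∀ i j, i ≤ j → j < c.length → c.getD i ∅ ⊆ c.getD j ∅ := by
  intro i j hij
  induction j with
  | zero =>
    intro _
    have : i = 0 := by omega
    subst this; exact Finset.Subset.refl _
  | succ m ih =>
    intro h
    by_cases him : i = m + 1
    · subst him; exact Finset.Subset.refl _
    · have h1 : i ≤ m := by omega
      exact (ih h1 (by omega)).trans (chain_cov hmc m (by omega)).2.2.1.subset

end ChainFacts

end BSAux
namespace BSAux

variable {S : Finset ℕ} {B : Finset (Finset ℕ)}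

/-- max of the new pair -/
def dA (c : List (Finset ℕ)) (i : ℕ) : ℕ := fmaxN (c.getD (i + 1) ∅ \ c.getD i ∅)
/-- min of the new pair -/
def dB (c : List (Finset ℕ)) (i : ℕ) : ℕ := fminN (c.getD (i + 1) ∅ \ c.getD i ∅)
/-- max of the next level -/
def dM (c : List (Finset ℕ)) (i : ℕ) : ℕ := fmaxN (c.getD (i + 1) ∅)

variable {c : List (Finset ℕ)}

lemma pair_struct (hB : BS.IsBuilding S B) (hch : BS.IsChordal B)
    (hmc : BS.IsMaxChain B S c) {i : ℕ} (h : i + 1 < c.length) :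
    c.getD (i + 1) ∅ \ c.getD i ∅ = {dA c i, dB c i} ∧ dB c i < dA c i := by
  have hcov := chain_cov hmc i h
  rw [covers_iff hB hch] at hcov
  obtain ⟨h1, h2, h12, hcard⟩ := hcov
  set D := c.getD (i + 1) ∅ \ c.getD i ∅ with hD
  obtain ⟨x, y, hxy, hDxy⟩ := Finset.card_eq_two.mp hcard
  have hDne : D.Nonempty := by rw [hDxy]; exact ⟨x, by simp⟩
  have haD : dA c i ∈ D := fmaxN_mem hDne
  have hbD : dB c i ∈ D := fminN_mem hDne
  have hux : dA c i = fmaxN D := rfl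
  have huy : dB c i = fminN D := rfl
  have hba : dB c i < dA c i := by
    rcases lt_or_eq_of_le (fminN_le (y := dA c i) haD) with h' | h'
    · rw [huy]; exact h'
    · exfalso
      have hx : x ∈ D := by rw [hDxy]; simp
      have hy : y ∈ D := by rw [hDxy]; simp
      apply hxy
      have h1 := fminN_le hx
      have h2 := le_fmaxN hx
      have h3 := fminN_le hy
      have h4 := le_fmaxN hy
      omega
  constructor
  · apply (Finset.eq_of_subset_of_card_le ?_ ?_).symm
    · intro z hz
      rcases Finset.mem_insert.mp hz with rfl | hz
      · exact haD
      · rw [Finset.mem_singleton] at hz; subst hz; exact hbD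
    · rw [hcard, Finset.card_pair (Nat.ne_of_gt hba)]
  · exact hba

lemma pairComp (hB : BS.IsBuilding S B) (hch : BS.IsChordal B)
    (hmc : BS.IsMaxChain B S c) {i : ℕ} (h : i + 1 < c.length) :
    ∃ K, BS.IsComponent (BS.restrict B (c.getD (i + 1) ∅)) K ∧ dA c i ∈ K ∧ dB c i ∈ K := by
  have hcov := chain_cov hmc i h
  obtain ⟨h1, h2, h12, _⟩ := hcov
  obtain ⟨hDeq, hba⟩ := pair_struct hB hch hmc h
  have haD : dA c i ∈ c.getD (i + 1) ∅ \ c.getD i ∅ := by rw [hDeq]; simp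
  have hbD : dB c i ∈ c.getD (i + 1) ∅ \ c.getD i ∅ := by rw [hDeq]; simp
  obtain ⟨K, hK, haK⟩ := exists_comp_mem hB h2.1 (Finset.mem_sdiff.mp haD).1
  refine ⟨K, hK, haK, ?_⟩
  have hKsub : K ⊆ c.getD (i + 1) ∅ := comp_subset hK
  have hKI : Even ((K ∩ c.getD i ∅).card) := even_inter hB h2.1 h12.subset h1.2 hK
  have hKcard : Even K.card := h2.2 K hK.1 hK
  have hsplit : K.card = (K ∩ c.getD i ∅).card + (K \ c.getD i ∅).card :=
    (Finset.card_inter_add_card_sdiff _ _).symm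
  have hKD : Even ((K \ c.getD i ∅).card) := by
    rcases hKI with ⟨p, hp⟩; rcases hKcard with ⟨q, hq⟩; exact ⟨q - p, by omega⟩
  have hsubD : K \ c.getD i ∅ ⊆ {dA c i, dB c i} := by
    rw [← hDeq]
    exact Finset.sdiff_subset_sdiff hKsub (le_refl _)
  have haKD : dA c i ∈ K \ c.getD i ∅ :=
    Finset.mem_sdiff.mpr ⟨haK, (Finset.mem_sdiff.mp haD).2⟩
  have := eq_pair_of_even hsubD (Nat.ne_of_gt hba) hKD ⟨dA c i, haKD⟩
  have hbKD : dB c i ∈ K \ c.getD i ∅ := by rw [this]; simp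
  exact (Finset.mem_sdiff.mp hbKD).1

lemma getD_nonempty (hB : BS.IsBuilding S B) (hch : BS.IsChordal B)
    (hmc : BS.IsMaxChain B S c) {i : ℕ} (h : i + 1 < c.length) :
    (c.getD (i + 1) ∅).Nonempty := by
  obtain ⟨hDeq, _⟩ := pair_struct hB hch hmc h
  refine ⟨dA c i, ?_⟩
  have : dA c i ∈ c.getD (i + 1) ∅ \ c.getD i ∅ := by rw [hDeq]; simp
  exact (Finset.mem_sdiff.mp this).1

lemma dM_stable (hB : BS.IsBuilding S B) (hch : BS.IsChordal B)
    (hmc : BS.IsMaxChain B S c) {i : ℕ} (h : i + 2 < c.length)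
    (hlt : dA c (i + 1) < dM c i) : dM c (i + 1) = dM c i := by
  obtain ⟨hDeq, hba⟩ := pair_struct hB hch hmc (show i + 1 + 1 < c.length by omega)
  have hmono := chain_mono hmc (i + 1) (i + 2) (by omega) h
  have hMmem : dM c i ∈ c.getD (i + 1) ∅ := fmaxN_mem (getD_nonempty hB hch hmc (by omega))
  apply fmaxN_eq (hmono hMmem)
  intro y hy
  by_cases hyI : y ∈ c.getD (i + 1) ∅
  · exact le_fmaxN hyI
  · have : y ∈ c.getD (i + 2) ∅ \ c.getD (i + 1) ∅ := Finset.mem_sdiff.mpr ⟨hy, hyI⟩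
    rw [hDeq] at this
    rcases Finset.mem_insert.mp this with rfl | hz
    · omega
    · rw [Finset.mem_singleton] at hz; subst hz; omega

lemma chain_alt (hB : BS.IsBuilding S B) (hch : BS.IsChordal B)
    (hmc : BS.IsMaxChain B S c) (hnd : ∀ i, ¬ BS.DecAt B c i) :
    ∀ i, i + 1 < c.length →
      ∃ K, BS.IsComponent (BS.restrict B (c.getD (i + 1) ∅)) K ∧
        dA c i ∈ K ∧ dB c i ∈ K ∧ dM c i ∈ K := by
  intro i
  induction i with
  | zero =>
    intro h
    obtain ⟨K, hK, haK, hbK⟩ := pairComp hB hch hmc h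
    refine ⟨K, hK, haK, hbK, ?_⟩
    have h0 : c.getD 0 ∅ = ∅ := chain_zero hmc
    have : dM c 0 = dA c 0 := by
      unfold dM dA
      rw [h0, Finset.sdiff_empty]
    rw [this]; exact haK
  | succ m ih =>
    intro h
    obtain ⟨K', hK', haK', hbK', hMK'⟩ := ih (by omega)
    obtain ⟨K, hK, haK, hbK⟩ := pairComp hB hch hmc h
    obtain ⟨hDeq, hba⟩ := pair_struct hB hch hmc h
    have haD : dA c (m + 1) ∈ c.getD (m + 2) ∅ \ c.getD (m + 1) ∅ := by rw [hDeq]; simp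
    have hanI : dA c (m + 1) ∉ c.getD (m + 1) ∅ := (Finset.mem_sdiff.mp haD).2
    have hMmem : dM c m ∈ c.getD (m + 1) ∅ :=
      fmaxN_mem (getD_nonempty hB hch hmc (by omega))
    have hdM : dM c m = fmaxN (c.getD (m + 1) ∅) := rfl
    rcases lt_or_ge (dM c m) (dA c (m + 1)) with hcase | hcase
    · -- new max
      have hMeq : dM c (m + 1) = dA c (m + 1) := by
        apply fmaxN_eq (Finset.mem_sdiff.mp haD).1
        intro y hy
        by_cases hyI : y ∈ c.getD (m + 1) ∅
        · have h5 : y ≤ dM c m := by rw [hdM]; exact le_fmaxN hyI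
          omega
        · have : y ∈ c.getD (m + 2) ∅ \ c.getD (m + 1) ∅ := Finset.mem_sdiff.mpr ⟨hy, hyI⟩
          rw [hDeq] at this
          rcases Finset.mem_insert.mp this with rfl | hz
          · omega
          · rw [Finset.mem_singleton] at hz; subst hz; omega
      exact ⟨K, hK, haK, hbK, hMeq ▸ haK⟩
    · have hlt : dA c (m + 1) < dM c m := lt_of_le_of_ne hcase (fun h' => hanI (h' ▸ hMmem))
      have hMeq : dM c (m + 1) = dM c m := dM_stable hB hch hmc (by omega) hlt
      have hMK : dM c m ∈ K := by
        by_contra hMK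
        apply hnd m
        refine ⟨by omega, ?_⟩
        obtain ⟨hDeq', hba'⟩ := pair_struct hB hch hmc (show m + 1 < c.length by omega)
        have hmu1 : BS.mu B (c.getD m ∅) (c.getD (m + 1) ∅)
            = ((dM c m : ℤ), (dA c m : ℤ), (dB c m : ℤ)) :=
          mu_eq hB hK' hDeq' hba' haK' hbK' hMK' (fun y hy => le_fmaxN hy)
        have hcomp : BS.comp B (c.getD (m + 1) ∅) (c.getD (m + 2) ∅) = K := by
          apply comp_eq hB hK
          · rw [hDeq]
            intro z hz
            rcases Finset.mem_insert.mp hz with rfl | hz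
            · exact haK
            · rw [Finset.mem_singleton] at hz; subst hz; exact hbK
          · rw [hDeq]; exact ⟨dA c (m + 1), by simp⟩
        have hmu2 : (BS.mu B (c.getD (m + 1) ∅) (c.getD (m + 2) ∅)).1 = (fmaxN K : ℤ) := by
          unfold BS.mu
          rw [hcomp]
          rfl
        have hKlt : fmaxN K < dM c m := by
          have h1 : fmaxN K ∈ K := fmaxN_mem ⟨dA c (m + 1), haK⟩
          have h2 : fmaxN K ∈ c.getD (m + 2) ∅ := comp_subset hK h1
          have h3 : fmaxN K ≤ dM c (m + 1) := le_fmaxN h2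
          rw [hMeq] at h3
          rcases lt_or_eq_of_le h3 with h' | h'
          · exact h'
          · exact absurd (h' ▸ h1) hMK
        constructor
        · left
          rw [hmu1, hmu2]
          dsimp only
          exact_mod_cast hKlt
        · intro heq
          have := congrArg Prod.fst heq
          rw [hmu1, hmu2] at this
          dsimp only at this
          omega
      exact ⟨K, hK, haK, hbK, hMeq ▸ hMK⟩

lemma chain_altern (hB : BS.IsBuilding S B) (hch : BS.IsChordal B)
    (hmc : BS.IsMaxChain B S c) (hnd : ∀ i, ¬ BS.DecAt B c i) :
    ∀ i, i + 2 < c.length → dB c i < dA c (i + 1) := by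
  intro i h
  obtain ⟨hDeq, hba⟩ := pair_struct hB hch hmc (show i + 1 < c.length by omega)
  obtain ⟨hDeq', hba'⟩ := pair_struct hB hch hmc (show i + 1 + 1 < c.length by omega)
  have hbmem : dB c i ∈ c.getD (i + 1) ∅ := by
    have : dB c i ∈ c.getD (i + 1) ∅ \ c.getD i ∅ := by rw [hDeq]; simp
    exact (Finset.mem_sdiff.mp this).1
  have haD : dA c (i + 1) ∈ c.getD (i + 2) ∅ \ c.getD (i + 1) ∅ := by rw [hDeq']; simp
  have hanI : dA c (i + 1) ∉ c.getD (i + 1) ∅ := (Finset.mem_sdiff.mp haD).2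
  by_contra hcon
  have hne : dA c (i + 1) ≠ dB c i := fun h' => hanI (h' ▸ hbmem)
  have hlt : dA c (i + 1) < dB c i := by omega
  have hamem : dA c i ∈ c.getD (i + 1) ∅ := by
    have : dA c i ∈ c.getD (i + 1) ∅ \ c.getD i ∅ := by rw [hDeq]; simp
    exact (Finset.mem_sdiff.mp this).1
  have hMa : dA c i ≤ dM c i := le_fmaxN hamem
  have hMeq : dM c (i + 1) = dM c i := dM_stable hB hch hmc h (by omega)
  obtain ⟨K, hK, haK, hbK, hMK⟩ := chain_alt hB hch hmc hnd i (by omega)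
  obtain ⟨K', hK', haK', hbK', hMK'⟩ := chain_alt hB hch hmc hnd (i + 1) (by omega)
  apply hnd i
  refine ⟨by omega, ?_⟩
  have hmu1 : BS.mu B (c.getD i ∅) (c.getD (i + 1) ∅)
      = ((dM c i : ℤ), (dA c i : ℤ), (dB c i : ℤ)) :=
    mu_eq hB hK hDeq hba haK hbK hMK (fun y hy => le_fmaxN hy)
  have hmu2 : BS.mu B (c.getD (i + 1) ∅) (c.getD (i + 2) ∅)
      = ((dM c (i + 1) : ℤ), (dA c (i + 1) : ℤ), (dB c (i + 1) : ℤ)) :=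
    mu_eq hB hK' hDeq' hba' haK' hbK' hMK' (fun y hy => le_fmaxN hy)
  rw [hmu1, hmu2]
  constructor
  · right
    constructor
    · dsimp only
      rw [hMeq]
    · left
      refine ⟨?_, ?_, ?_⟩ <;> dsimp only <;> omega
  · intro heq
    have h9 := congrArg (fun t : ℤ × ℤ × ℤ => t.2.1) heq
    dsimp only at h9
    omega

end BSAux
namespace BSAux

variable {S : Finset ℕ} {B : Finset (Finset ℕ)}

lemma recon {L : List ℕ} (hnd : L.Nodup) (halt : BS.IsAlternating L) (hev : Even L.length)
    {j : ℕ} (hj : j < L.length) :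
    L.getD j 0 = if j % 2 = 0
      then fmaxN ((L.take (2 * (j / 2 + 1))).toFinset \ (L.take (2 * (j / 2))).toFinset)
      else fminN ((L.take (2 * (j / 2 + 1))).toFinset \ (L.take (2 * (j / 2))).toFinset) := by
  have h2m : 2 * (j / 2) + 1 < L.length := by obtain ⟨t, ht⟩ := hev; omega
  have e : 2 * (j / 2 + 1) = 2 * (j / 2) + 2 := by ring
  rw [e, diff_eq hnd h2m]
  have hba : L.getD (2 * (j / 2) + 1) 0 < L.getD (2 * (j / 2)) 0 :=
    (halt (2 * (j / 2)) (by omega)).1 (by omega)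
  have hje : j = 2 * (j / 2) ∨ j = 2 * (j / 2) + 1 := by omega
  by_cases hp : j % 2 = 0
  · rw [if_pos hp]
    have hj2 : j = 2 * (j / 2) := by omega
    rw [fmaxN_eq (M := L.getD (2 * (j / 2)) 0) (by simp) ?_, ← hj2]
    intro y hy
    rcases Finset.mem_insert.mp hy with rfl | hy
    · exact le_refl _
    · rw [Finset.mem_singleton] at hy; subst hy; omega
  · rw [if_neg hp]
    have hj2 : j = 2 * (j / 2) + 1 := by omega
    rw [fminN_eq (m := L.getD (2 * (j / 2) + 1) 0) (by simp) ?_, ← hj2]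
    intro y hy
    rcases Finset.mem_insert.mp hy with rfl | hy
    · omega
    · rw [Finset.mem_singleton] at hy; subst hy; exact le_refl _

/-- the canonical reconstruction data -/
def permF (c : List (Finset ℕ)) : ℕ → ℕ :=
  fun j => if j % 2 = 0 then dA c (j / 2) else dB c (j / 2)

def permL (c : List (Finset ℕ)) : List ℕ :=
  (List.range (2 * (c.length - 1))).map (permF c)

lemma permF_even (c : List (Finset ℕ)) (i : ℕ) : permF c (2 * i) = dA c i := by
  unfold permF
  rw [if_pos (by omega)]
  congr 1
  omega

lemma permF_odd (c : List (Finset ℕ)) (i : ℕ) : permF c (2 * i + 1) = dB c i := by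
  unfold permF
  rw [if_neg (by omega)]
  congr 1
  omega

lemma permL_take (c : List (Finset ℕ)) {m : ℕ} (hm : m ≤ 2 * (c.length - 1)) :
    (permL c).take m = (List.range m).map (permF c) := by
  unfold permL
  rw [← List.map_take, List.take_range, min_eq_left hm]

lemma permL_length (c : List (Finset ℕ)) : (permL c).length = 2 * (c.length - 1) := by
  simp [permL]

lemma permL_prefix (hB : BS.IsBuilding S B) (hch : BS.IsChordal B) {c : List (Finset ℕ)}
    (hmc : BS.IsMaxChain B S c) :
    ∀ i, i ≤ c.length - 1 → ((List.range (2 * i)).map (permF c)).toFinset = c.getD i ∅ := by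
  have hlpos : 1 ≤ c.length := List.length_pos_iff.mpr (chain_ne hmc)
  intro i
  induction i with
  | zero => intro _; simpa using (chain_zero hmc).symm
  | succ m ih =>
    intro hm
    have hm1 : m + 1 < c.length := by omega
    have e1 : 2 * (m + 1) = (2 * m + 1) + 1 := by ring
    rw [e1, map_range_succ_toFinset, map_range_succ_toFinset, permF_odd, permF_even,
      ih (by omega)]
    obtain ⟨hDeq, hba⟩ := pair_struct hB hch hmc hm1
    have hun : c.getD m ∅ ∪ (c.getD (m + 1) ∅ \ c.getD m ∅) = c.getD (m + 1) ∅ :=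
      Finset.union_sdiff_of_subset (chain_mono hmc m (m + 1) (by omega) hm1)
    rw [hDeq] at hun
    rw [← hun]
    ext x
    simp only [Finset.mem_insert, Finset.mem_union, Finset.mem_singleton]
    tauto

lemma permL_nodup (hB : BS.IsBuilding S B) (hch : BS.IsChordal B) {c : List (Finset ℕ)}
    (hmc : BS.IsMaxChain B S c) : (permL c).Nodup := by
  have hlpos : 1 ≤ c.length := List.length_pos_iff.mpr (chain_ne hmc)
  suffices h : ∀ m, m ≤ 2 * (c.length - 1) → ((List.range m).map (permF c)).Nodup by
    exact h _ (le_refl _)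
  intro m
  induction m with
  | zero => intro _; simp
  | succ m ih =>
    intro hm
    rw [List.range_succ, List.map_append, List.nodup_append]
    refine ⟨ih (by omega), by simp, ?_⟩
    intro y hy z hz hy2
    simp only [List.map_cons, List.map_nil, List.mem_singleton] at hz
    subst hz
    subst hy2
    have hymem : permF c m ∈ ((List.range m).map (permF c)).toFinset := List.mem_toFinset.mpr hy
    have hpar : m = 2 * (m / 2) ∨ m = 2 * (m / 2) + 1 := by omega
    set i := m / 2 with hi
    have hi1 : i + 1 < c.length := by omega
    obtain ⟨hDeq, hba⟩ := pair_struct hB hch hmc hi1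
    have haD : dA c i ∈ c.getD (i + 1) ∅ \ c.getD i ∅ := by rw [hDeq]; simp
    have hbD : dB c i ∈ c.getD (i + 1) ∅ \ c.getD i ∅ := by rw [hDeq]; simp
    rcases hpar with hpar | hpar
    · rw [hpar, permF_even] at hymem
      rw [permL_prefix hB hch hmc i (by omega)] at hymem
      exact (Finset.mem_sdiff.mp haD).2 hymem
    · rw [hpar, permF_odd] at hymem
      have e1 : 2 * i + 1 = (2 * i) + 1 := rfl
      rw [e1, map_range_succ_toFinset, permF_even, permL_prefix hB hch hmc i (by omega)]
        at hymem
      rcases Finset.mem_insert.mp hymem with heq | hmem2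
      · omega
      · exact (Finset.mem_sdiff.mp hbD).2 hmem2

lemma permL_toFinset (hB : BS.IsBuilding S B) (hch : BS.IsChordal B) {c : List (Finset ℕ)}
    (hmc : BS.IsMaxChain B S c) : (permL c).toFinset = S := by
  have h := permL_prefix hB hch hmc (c.length - 1) (le_refl _)
  rw [chain_last hmc] at h
  exact h

lemma permL_getD {c : List (Finset ℕ)} {j : ℕ} (hj : j < 2 * (c.length - 1)) :
    (permL c).getD j 0 = permF c j := by
  unfold permL
  exact getD_map_range _ _ hj

lemma permL_alternating (hB : BS.IsBuilding S B) (hch : BS.IsChordal B) {c : List (Finset ℕ)}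
    (hmc : BS.IsMaxChain B S c) (hnd : ∀ i, ¬ BS.DecAt B c i) :
    BS.IsAlternating (permL c) := by
  intro j hj
  rw [permL_length] at hj
  rw [permL_getD (by omega), permL_getD (by omega)]
  constructor
  · intro hp
    have hj2 : j = 2 * (j / 2) := by omega
    rw [hj2, permF_even, permF_odd]
    exact (pair_struct hB hch hmc (show j / 2 + 1 < c.length by omega)).2
  · intro hp
    have hj2 : j = 2 * (j / 2) + 1 := by omega
    rw [hj2]
    have e : 2 * (j / 2) + 1 + 1 = 2 * (j / 2 + 1) := by ring
    rw [e, permF_odd, permF_even]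
    exact chain_altern hB hch hmc hnd (j / 2) (by omega)

lemma permL_bperm (hB : BS.IsBuilding S B) (hch : BS.IsChordal B) {c : List (Finset ℕ)}
    (hmc : BS.IsMaxChain B S c) (hnd : ∀ i, ¬ BS.DecAt B c i) :
    BS.IsBPerm B S (permL c) := by
  have hlpos : 1 ≤ c.length := List.length_pos_iff.mpr (chain_ne hmc)
  refine ⟨⟨permL_nodup hB hch hmc, permL_toFinset hB hch hmc⟩, ?_⟩
  intro j hj
  rw [permL_length] at hj
  rcases (show j = 2 * (j / 2) ∨ j = 2 * (j / 2) + 1 by omega) with hj2 | hj2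
  · -- even position: the new max element dA
    set i := j / 2 with hi
    have hi1 : i + 1 < c.length := by omega
    obtain ⟨hDeq, hba⟩ := pair_struct hB hch hmc hi1
    have haD : dA c i ∈ c.getD (i + 1) ∅ \ c.getD i ∅ := by rw [hDeq]; simp
    have hbD : dB c i ∈ c.getD (i + 1) ∅ \ c.getD i ∅ := by rw [hDeq]; simp
    have hanI : dA c i ∉ c.getD i ∅ := (Finset.mem_sdiff.mp haD).2
    have hgetD : (permL c).getD j 0 = dA c i := by
      rw [permL_getD (by omega), hj2, permF_even]
    have hQ : ((permL c).take (j + 1)).toFinset = insert (dA c i) (c.getD i ∅) := by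
      rw [permL_take c (by omega)]
      have e1 : j + 1 = 2 * i + 1 := by omega
      rw [e1]
      have e2 : 2 * i + 1 = (2 * i) + 1 := rfl
      rw [e2, map_range_succ_toFinset, permF_even, permL_prefix hB hch hmc i (by omega)]
    have hQS : ((permL c).take (j + 1)).toFinset ⊆ S := by
      rw [← permL_toFinset hB hch hmc (c := c)]
      exact toFinset_take_subset _
    have haQ : dA c i ∈ ((permL c).take (j + 1)).toFinset := by
      rw [hQ]; exact Finset.mem_insert_self _ _
    by_cases hcase : ∀ y ∈ c.getD i ∅, y < dA c i
    · obtain ⟨C, hC, haC⟩ := exists_comp_mem hB hQS haQ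
      refine ⟨C, hC, by rw [hgetD]; exact haC, dA c i, haC, ?_⟩
      intro y hy
      rw [hQ] at hy
      rcases Finset.mem_insert.mp hy with rfl | hy
      · exact le_refl _
      · exact le_of_lt (hcase y hy)
    · push_neg at hcase
      obtain ⟨y0, hy0, hy0le⟩ := hcase
      set Mp := fmaxN (c.getD i ∅) with hMp
      have hMpmem : Mp ∈ c.getD i ∅ := fmaxN_mem ⟨y0, hy0⟩
      have haMp : dA c i < Mp := by
        have h1 : dA c i ≤ Mp := le_trans hy0le (le_fmaxN hy0)
        rcases lt_or_eq_of_le h1 with h' | h'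
        · exact h'
        · exact absurd (h' ▸ hMpmem) hanI
      have hdMeq : dM c i = Mp := by
        apply fmaxN_eq (chain_mono hmc i (i + 1) (by omega) hi1 hMpmem)
        intro y hy
        by_cases hyI : y ∈ c.getD i ∅
        · exact le_fmaxN hyI
        · have : y ∈ c.getD (i + 1) ∅ \ c.getD i ∅ := Finset.mem_sdiff.mpr ⟨hy, hyI⟩
          rw [hDeq] at this
          rcases Finset.mem_insert.mp this with rfl | hz
          · omega
          · rw [Finset.mem_singleton] at hz; subst hz; omega
      obtain ⟨K, hK, haK, hbK, hMK⟩ := chain_alt hB hch hmc hnd i hi1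
      rw [hdMeq] at hMK
      have hKB : K ∈ B := (mem_restrict.mp hK.1).1
      set J := K.filter (fun x => dA c i ≤ x) with hJ
      have hJB : J ∈ B := hch K hKB (dA c i) haK
      have haJ : dA c i ∈ J := by rw [hJ, Finset.mem_filter]; exact ⟨haK, le_refl _⟩
      have hMpJ : Mp ∈ J := by
        rw [hJ, Finset.mem_filter]; exact ⟨hMK, le_of_lt haMp⟩
      have hJQ : J ⊆ ((permL c).take (j + 1)).toFinset := by
        rw [hQ]
        intro x hx
        rw [hJ, Finset.mem_filter] at hx
        obtain ⟨hxK, hax⟩ := hx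
        have hxI1 : x ∈ c.getD (i + 1) ∅ := comp_subset hK hxK
        by_cases hxI : x ∈ c.getD i ∅
        · exact Finset.mem_insert_of_mem hxI
        · have : x ∈ c.getD (i + 1) ∅ \ c.getD i ∅ := Finset.mem_sdiff.mpr ⟨hxI1, hxI⟩
          rw [hDeq] at this
          rcases Finset.mem_insert.mp this with rfl | hz
          · exact Finset.mem_insert_self _ _
          · rw [Finset.mem_singleton] at hz; subst hz; omega
      have hJr : J ∈ BS.restrict B ((permL c).take (j + 1)).toFinset :=
        mem_restrict.mpr ⟨hJB, hJQ⟩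
      obtain ⟨C, hC, hJC⟩ := exists_comp hJr
      refine ⟨C, hC, by rw [hgetD]; exact hJC haJ, Mp, hJC hMpJ, ?_⟩
      intro y hy
      rw [hQ] at hy
      rcases Finset.mem_insert.mp hy with rfl | hy
      · exact le_of_lt haMp
      · exact le_fmaxN hy
  · -- odd position: dB, connected to the maximum
    set i := j / 2 with hi
    have hi1 : i + 1 < c.length := by omega
    have hgetD : (permL c).getD j 0 = dB c i := by
      rw [permL_getD (by omega), hj2, permF_odd]
    have hQ : ((permL c).take (j + 1)).toFinset = c.getD (i + 1) ∅ := by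
      rw [permL_take c (by omega)]
      have e1 : j + 1 = 2 * (i + 1) := by omega
      rw [e1, permL_prefix hB hch hmc (i + 1) (by omega)]
    obtain ⟨K, hK, haK, hbK, hMK⟩ := chain_alt hB hch hmc hnd i hi1
    rw [← hQ] at hK
    refine ⟨K, hK, by rw [hgetD]; exact hbK, dM c i, hMK, ?_⟩
    intro y hy
    rw [hQ] at hy
    exact le_fmaxN hy

lemma chainOf_permL (hB : BS.IsBuilding S B) (hch : BS.IsChordal B) {c : List (Finset ℕ)}
    (hmc : BS.IsMaxChain B S c) : chainOf (permL c) = c := by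
  have hlpos : 1 ≤ c.length := List.length_pos_iff.mpr (chain_ne hmc)
  have hlen : (chainOf (permL c)).length = c.length := by
    rw [chainOf, List.length_map, List.length_range, permL_length]
    omega
  apply List.ext_getElem hlen
  intro i h1 h2
  have hi : i < c.length := h2
  have h3 : i < (permL c).length / 2 + 1 := by
    rw [permL_length]; omega
  have h4 : (chainOf (permL c))[i] = (chainOf (permL c)).getD i ∅ := (getD_eq' h1).symm
  rw [h4, chainOf_getD h3, permL_take c (by rw [permL_length] at h3; omega),
    permL_prefix hB hch hmc i (by omega), getD_eq' hi]

end BSAux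
/-- For a chordal building set `B` on `S` with no odd connected component, the map
sending an alternating `B`-permutation `x` to the chain `(∅,{x₁,x₂},…,S)` is a
bijection between alternating `B`-permutations of `S` and maximal chains of `P̂_B`
whose label sequence `μ_B` has no decreasing position. -/
theorem alternating_bijOn_maxChains (S : Finset ℕ) (B : Finset (Finset ℕ))
    (hB : BS.IsBuilding S B) (hc : BS.IsChordal B) (hno : BS.NoOddComp B S) :
    Set.BijOn chainOf
      {L : List ℕ | BS.IsBPerm B S L ∧ BS.IsAlternating L}
      {c : List (Finset ℕ) | BS.IsMaxChain B S c ∧ ∀ i, ¬ BS.DecAt B c i} := by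
  have hSeven : Even S.card := BSAux.even_card_of_noOdd hB (Finset.Subset.refl S) hno
  refine ⟨?_, ?_, ?_⟩
  · intro L hL
    exact BSAux.forward hB hc hno hL.1 hL.2
  · intro L₁ h₁ L₂ h₂ heq
    obtain ⟨hbp₁, halt₁⟩ := h₁
    obtain ⟨hbp₂, halt₂⟩ := h₂
    have hnd₁ := hbp₁.1.1
    have hnd₂ := hbp₂.1.1
    have hlen₁ : L₁.length = S.card := by
      rw [← hbp₁.1.2]; exact (List.toFinset_card_of_nodup hnd₁).symm
    have hlen₂ : L₂.length = S.card := by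
      rw [← hbp₂.1.2]; exact (List.toFinset_card_of_nodup hnd₂).symm
    have hleneq : L₁.length = L₂.length := by rw [hlen₁, hlen₂]
    have heven₁ : Even L₁.length := by rw [hlen₁]; exact hSeven
    have heven₂ : Even L₂.length := by rw [hlen₂]; exact hSeven
    have hpref : ∀ m, 2 * m ≤ L₁.length →
        (L₁.take (2 * m)).toFinset = (L₂.take (2 * m)).toFinset := by
      intro m hm
      have e₁ := BSAux.chainOf_getD (L := L₁) (i := m) (by omega)
      have e₂ := BSAux.chainOf_getD (L := L₂) (i := m) (by rw [← hleneq]; omega)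
      rw [← e₁, ← e₂, heq]
    apply List.ext_getElem hleneq
    intro j hj1 hj2
    rw [← BSAux.getD_eq hj1, ← BSAux.getD_eq hj2]
    rw [BSAux.recon hnd₁ halt₁ heven₁ hj1, BSAux.recon hnd₂ halt₂ heven₂ hj2]
    have hb1 : 2 * (j / 2) ≤ L₁.length := by omega
    have hb2 : 2 * (j / 2 + 1) ≤ L₁.length := by
      obtain ⟨t, ht⟩ := heven₁; omega
    rw [hpref (j / 2) hb1, hpref (j / 2 + 1) hb2]
  · intro c hcmem
    obtain ⟨hmc, hndc⟩ := hcmem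
    exact ⟨BSAux.permL c,
      ⟨BSAux.permL_bperm hB hc hmc hndc, BSAux.permL_alternating hB hc hmc hndc⟩,
      BSAux.chainOf_permL hB hc hmc⟩
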